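/- Exponential accuracy of the optimal interval: Fix r > 0, δ > 0 and θ0 ∈ Θ, assume the LDP upper bound at θ0, and assume that each J̄^δ_{T,r} and J̲^δ_{T,r} is Borel measurable. Then limsup_{T→∞} (1/b_T) log P_{θ0}(J(θ0) > J̄^δ_{T,r}(θ̂_T)) ≤ −r and limsup_{T→∞} (1/b_T) log P_{θ0}(J(θ0) < J̲^δ_{T,r}(θ̂_T)) ≤ −r; consequently limsup_{T→∞} (1/b_T) log P_{θ0}(J(θ0) ∉ [J̲^δ_{T,r}(θ̂_T), J̄^δ_{T,r}(θ̂_T)]) ≤ −r. If moreover I_{θ0} : E → [0,∞] is continuous, the same conclusions hold for δ = 0. -/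
import Mathlib


set_option autoImplicit false

open Filter Topology Metric Set MeasureTheory

noncomputable section

variable {E : Type*} [NormedAddCommGroup E] [NormedSpace ℝ E]

/-- The sublevel set `S_{θ,r} = {ϑ ∈ E : I_θ(ϑ) ≤ r}` of the rate function. -/
def sublevelSet (I : E → E → ENNReal) (θ : E) (r : ℝ) : Set E :=
  {ϑ : E | I θ ϑ ≤ ENNReal.ofReal r}

/-- The open `δ`-fattening `S^δ_{θ,r}` of the sublevel set, where `S^0_{θ,r} = S_{θ,r}`;
for `δ > 0` it is the set of points at distance `< δ` from `S_{θ,r}`, i.e. the union of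
open balls of radius `δ` around points of `S_{θ,r}`. -/
def fatSublevel (I : E → E → ENNReal) (θ : E) (r δ : ℝ) : Set E :=
  if δ = 0 then sublevelSet I θ r
  else ⋃ ϑ ∈ sublevelSet I θ r, Metric.ball ϑ δ

/-- Growth condition (G1): for sequences `θ_n ∈ Θ` with `sup_n ‖θ_n‖ < ∞` and
`‖ϑ_n‖ → ∞`, `I_{θ_n}(ϑ_n) → ∞`. -/
def GrowthG1 (Θ : Set E) (I : E → E → ENNReal) : Prop :=
  ∀ θs ϑs : ℕ → E, (∀ n, θs n ∈ Θ) → (∃ C : ℝ, ∀ n, ‖θs n‖ ≤ C) →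
    Tendsto (fun n => ‖ϑs n‖) atTop atTop →
    Tendsto (fun n => I (θs n) (ϑs n)) atTop (nhds ⊤)

/-- Growth condition (G2): for sequences `θ_n ∈ Θ` with `‖θ_n‖ → ∞` and
`‖ϑ_n‖/‖θ_n‖ → ∞`, `limsup_n I_{θ_n}(ϑ_n) = ∞`. -/
def GrowthG2 (Θ : Set E) (I : E → E → ENNReal) : Prop :=
  ∀ θs ϑs : ℕ → E, (∀ n, θs n ∈ Θ) →
    Tendsto (fun n => ‖θs n‖) atTop atTop →
    Tendsto (fun n => ‖ϑs n‖ / ‖θs n‖) atTop atTop →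
    Filter.limsup (fun n => I (θs n) (ϑs n)) atTop = ⊤

/-- The upper confidence bound `J̄^δ_{T,r}(θ') = sup {J(θ) : θ ∈ Θ, a_T (θ' - θ) ∈ S^δ_{θ,r}}`. -/
def upperCB (Θ : Set E) (I : E → E → ENNReal) (J : E → ℝ) (r δ : ℝ) (a : ℝ → ℝ)
    (T : ℝ) (θ' : E) : ℝ :=
  sSup (J '' {θ : E | θ ∈ Θ ∧ a T • (θ' - θ) ∈ fatSublevel I θ r δ})

/-- The lower confidence bound `J̲^δ_{T,r}(θ') = inf {J(θ) : θ ∈ Θ, a_T (θ' - θ) ∈ S^δ_{θ,r}}`. -/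
def lowerCB (Θ : Set E) (I : E → E → ENNReal) (J : E → ℝ) (r δ : ℝ) (a : ℝ → ℝ)
    (T : ℝ) (θ' : E) : ℝ :=
  sInf (J '' {θ : E | θ ∈ Θ ∧ a T • (θ' - θ) ∈ fatSublevel I θ r δ})

variable {Ω : Type*} [MeasurableSpace Ω]

/-- LDP lower bound at `θ0` for the family `a_T (θ̂_T − θ0)` with speed `b_T`:
for every open `G ⊆ E`,
`liminf_{T→∞} (1/b_T) log P(a_T(θ̂_T − θ0) ∈ G) ≥ − inf_{ϑ ∈ G} I(ϑ)`. -/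
def LDPLowerAt (P : Measure Ω) (θhat : ℝ → Ω → E) (a b : ℝ → ℝ)
    (Irate : E → ENNReal) (θ0 : E) : Prop :=
  ∀ G : Set E, IsOpen G →
    -(((⨅ ϑ ∈ G, Irate ϑ) : ENNReal) : EReal) ≤
      Filter.liminf
        (fun T => (((b T)⁻¹ : ℝ) : EReal) *
          ENNReal.log (P {ω | a T • (θhat T ω - θ0) ∈ G})) atTop

/-- LDP upper bound at `θ0` for the family `a_T (θ̂_T − θ0)` with speed `b_T`:
for every closed `F ⊆ E`,
`limsup_{T→∞} (1/b_T) log P(a_T(θ̂_T − θ0) ∈ F) ≤ − inf_{ϑ ∈ F} I(ϑ)`. -/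
def LDPUpperAt (P : Measure Ω) (θhat : ℝ → Ω → E) (a b : ℝ → ℝ)
    (Irate : E → ENNReal) (θ0 : E) : Prop :=
  ∀ F : Set E, IsClosed F →
    Filter.limsup
      (fun T => (((b T)⁻¹ : ℝ) : EReal) *
        ENNReal.log (P {ω | a T • (θhat T ω - θ0) ∈ F})) atTop ≤
      -(((⨅ ϑ ∈ F, Irate ϑ) : ENNReal) : EReal)

/-- Extended-real valued upper confidence bound
`J̄^δ_{T,r}(θ') = sup {J(θ) : θ ∈ Θ, a_T (θ' - θ) ∈ S^δ_{θ,r}}`. -/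
def upperCBE (Θ : Set E) (I : E → E → ENNReal) (J : E → ℝ) (r δ : ℝ) (a : ℝ → ℝ)
    (T : ℝ) (θ' : E) : EReal :=
  sSup ((fun θ => (J θ : EReal)) '' {θ : E | θ ∈ Θ ∧ a T • (θ' - θ) ∈ fatSublevel I θ r δ})

/-- Extended-real valued lower confidence bound
`J̲^δ_{T,r}(θ') = inf {J(θ) : θ ∈ Θ, a_T (θ' - θ) ∈ S^δ_{θ,r}}`. -/
def lowerCBE (Θ : Set E) (I : E → E → ENNReal) (J : E → ℝ) (r δ : ℝ) (a : ℝ → ℝ)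
    (T : ℝ) (θ' : E) : EReal :=
  sInf ((fun θ => (J θ : EReal)) '' {θ : E | θ ∈ Θ ∧ a T • (θ' - θ) ∈ fatSublevel I θ r δ})

/-- exponential accuracy of the optimal interval: under the LDP upper bound
at `θ0`, both one-sided error probabilities decay with exponential rate `r` and speed
`b_T`, and consequently so does the two-sided error probability; this holds for `δ > 0`,
and also for `δ = 0` if `I_{θ0}` is continuous. -/
theorem stmt8 (Θ : Set E) (hΘ : Θ.Nonempty) (I : E → E → ENNReal) (J : E → ℝ)
    [MeasurableSpace E] [BorelSpace E]
    (P : E → Measure Ω) (hP : ∀ θ, IsProbabilityMeasure (P θ))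
    (θhat : ℝ → Ω → E) (hθhatmeas : ∀ T, Measurable (θhat T))
    (b a : ℝ → ℝ) (hbpos : ∀ T, 0 < b T) (hbtop : Tendsto b atTop atTop)
    (hadef : ∀ T, a T = Real.sqrt (T / b T)) (hatop : Tendsto a atTop atTop)
    (r δ : ℝ) (hr : 0 < r)
    (θ0 : E) (hθ0 : θ0 ∈ Θ)
    (hδ : 0 < δ ∨ (δ = 0 ∧ Continuous (fun ϑ => I θ0 ϑ)))
    (hLDPup : LDPUpperAt (P θ0) θhat a b (I θ0) θ0)
    (hmeasU : ∀ T, Measurable (upperCBE Θ I J r δ a T))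
    (hmeasL : ∀ T, Measurable (lowerCBE Θ I J r δ a T)) :
    Filter.limsup
        (fun T => (((b T)⁻¹ : ℝ) : EReal) *
          ENNReal.log (P θ0 {ω | upperCBE Θ I J r δ a T (θhat T ω) < (J θ0 : EReal)}))
        atTop ≤ ((-r : ℝ) : EReal) ∧
    Filter.limsup
        (fun T => (((b T)⁻¹ : ℝ) : EReal) *
          ENNReal.log (P θ0 {ω | (J θ0 : EReal) < lowerCBE Θ I J r δ a T (θhat T ω)}))
        atTop ≤ ((-r : ℝ) : EReal) ∧
    Filter.limsup
        (fun T => (((b T)⁻¹ : ℝ) : EReal) *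
          ENNReal.log (P θ0 {ω | ¬(lowerCBE Θ I J r δ a T (θhat T ω) ≤ (J θ0 : EReal) ∧
            (J θ0 : EReal) ≤ upperCBE Θ I J r δ a T (θhat T ω))}))
        atTop ≤ ((-r : ℝ) : EReal) := by
  classical
  set F : Set E := closure ((fatSublevel I θ0 r δ)ᶜ) with hFdef
  have hFclosed : IsClosed F := isClosed_closure
  have hcompl : (fatSublevel I θ0 r δ)ᶜ ⊆ F := subset_closure
  have hsubF : ∀ ϑ ∈ F, ENNReal.ofReal r ≤ I θ0 ϑ := by
    rcases hδ with h | ⟨h0, hcont⟩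
    · have hopen : IsOpen (fatSublevel I θ0 r δ) := by
        rw [fatSublevel, if_neg h.ne']
        exact isOpen_biUnion fun _ _ => Metric.isOpen_ball
      have hFeq : F = (fatSublevel I θ0 r δ)ᶜ := by
        rw [hFdef, hopen.isClosed_compl.closure_eq]
      intro ϑ hϑ
      rw [hFeq] at hϑ
      have hns : ϑ ∉ sublevelSet I θ0 r := by
        intro hs
        exact hϑ (by
          rw [fatSublevel, if_neg h.ne']
          exact Set.mem_biUnion hs (Metric.mem_ball_self h))
      have : ¬ I θ0 ϑ ≤ ENNReal.ofReal r := hns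
      exact le_of_lt (lt_of_not_ge this)
    · have hcl : IsClosed {ϑ : E | ENNReal.ofReal r ≤ I θ0 ϑ} :=
        IsClosed.preimage hcont isClosed_Ici
      have hsub : (fatSublevel I θ0 r δ)ᶜ ⊆ {ϑ : E | ENNReal.ofReal r ≤ I θ0 ϑ} := by
        intro ϑ hϑ
        rw [fatSublevel, if_pos h0] at hϑ
        have : ¬ I θ0 ϑ ≤ ENNReal.ofReal r := hϑ
        exact le_of_lt (lt_of_not_ge this)
      exact fun ϑ hϑ => closure_minimal hsub hcl hϑ
  have hinf : (ENNReal.ofReal r : ENNReal) ≤ ⨅ ϑ ∈ F, I θ0 ϑ :=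
    le_iInf₂ hsubF
  have hlimF : Filter.limsup
      (fun T => (((b T)⁻¹ : ℝ) : EReal) *
        ENNReal.log (P θ0 {ω | a T • (θhat T ω - θ0) ∈ F})) atTop ≤ ((-r : ℝ) : EReal) := by
    refine le_trans (hLDPup F hFclosed) ?_
    have h1 : ((-r : ℝ) : EReal) = -(((ENNReal.ofReal r : ENNReal)) : EReal) := by
      rw [EReal.coe_ennreal_ofReal, max_eq_left hr.le]
      rfl
    rw [h1]
    rw [EReal.neg_le_neg_iff]
    exact_mod_cast hinf
  -- membership in fatSublevel gives the CB sandwich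
  have hsand : ∀ T (ω : Ω), a T • (θhat T ω - θ0) ∈ fatSublevel I θ0 r δ →
      lowerCBE Θ I J r δ a T (θhat T ω) ≤ (J θ0 : EReal) ∧
      (J θ0 : EReal) ≤ upperCBE Θ I J r δ a T (θhat T ω) := by
    intro T ω hmem
    have hJ : ((J θ0 : EReal)) ∈
        (fun θ => (J θ : EReal)) '' {θ : E | θ ∈ Θ ∧
          a T • (θhat T ω - θ) ∈ fatSublevel I θ r δ} :=
      ⟨θ0, ⟨hθ0, hmem⟩, rfl⟩
    exact ⟨sInf_le hJ, le_sSup hJ⟩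
  have hkey : ∀ (S : ℝ → Set Ω),
      (∀ T (ω : Ω), ω ∈ S T → a T • (θhat T ω - θ0) ∈ F) →
      Filter.limsup (fun T => (((b T)⁻¹ : ℝ) : EReal) *
        ENNReal.log (P θ0 (S T))) atTop ≤ ((-r : ℝ) : EReal) := by
    intro S hS
    refine le_trans (Filter.limsup_le_limsup ?_) hlimF
    refine Filter.Eventually.of_forall fun T => ?_
    have hle : P θ0 (S T) ≤ P θ0 {ω | a T • (θhat T ω - θ0) ∈ F} :=
      measure_mono fun ω hω => hS T ω hω
    exact mul_le_mul_of_nonneg_left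
      (by exact_mod_cast ENNReal.log_monotone hle)
      (by exact_mod_cast inv_nonneg.2 (hbpos T).le)
  refine ⟨hkey _ ?_, hkey _ ?_, hkey _ ?_⟩
  · intro T ω hω
    refine hcompl fun hmem => ?_
    exact absurd (hsand T ω hmem).2 (not_le.mpr hω)
  · intro T ω hω
    refine hcompl fun hmem => ?_
    exact absurd (hsand T ω hmem).1 (not_le.mpr hω)
  · intro T ω hω
    refine hcompl fun hmem => ?_
    exact hω (hsand T ω hmem)
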